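/- For every dimension d ≥ 1 and every s ∈ ℕ with s ≥ 1 there exist constants ρ(d,s) > 0 and C(d,s) > 0 with the following property. Let h > 0 and let X ⊂ ℝ^d be a set of points with covering radius at most h, i.e. for every y ∈ ℝ^d there exists x ∈ X with |y − x| ≤ h. Then for every x₀ ∈ ℝ^d there exist a finite subset σ ⊆ X with #σ = s^d contained in the closed ball of radius ρ(d,s)·h around x₀, and weights w : σ → ℝ with Σ_{x∈σ} |w_x| ≤ C(d,s), such that p(x₀) = Σ_{x∈σ} w_x · p(x) for every polynomial p : ℝ^d → ℝ of total degree at most s − 1. -/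

import Mathlib

open Matrix in
/-- The (perturbed) tensor-grid Vandermonde matrix. -/
noncomputable def PRmat (d s : ℕ) (η : (Fin d → Fin s) → Fin d → ℝ) :
    Matrix (Fin d → Fin s) (Fin d → Fin s) ℝ :=
  fun ν α => ∏ m, (((ν m : ℕ) : ℝ) + η ν m) ^ ((α m : ℕ))

open Matrix Kronecker in
lemma PRmat_det_ne_zero (d s : ℕ) : (PRmat d s 0).det ≠ 0 := by
  induction d with
  | zero =>
      rw [Matrix.det_unique]
      simp [PRmat]
  | succ d ih =>
      set V : Matrix (Fin s) (Fin s) ℝ := Matrix.vandermonde (fun i : Fin s => ((i : ℕ) : ℝ))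
      have hV : V.det ≠ 0 := by
        rw [Matrix.det_vandermonde_ne_zero_iff]
        intro i j hij
        exact Fin.val_injective (Nat.cast_injective hij)
      set e := Fin.consEquiv (fun _ : Fin (d + 1) => Fin s)
      have hEq : PRmat (d + 1) s 0 = Matrix.reindex e e (V ⊗ₖ PRmat d s 0) := by
        ext ν α
        simp only [Matrix.reindex_apply, Matrix.submatrix_apply, Matrix.kroneckerMap_apply,
          PRmat, Pi.zero_apply, add_zero, e, Fin.consEquiv, Equiv.coe_fn_symm_mk]
        rw [Fin.prod_univ_succ]
        rfl
      rw [hEq, Matrix.det_reindex_self, Matrix.det_kronecker]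
      exact mul_ne_zero (pow_ne_zero _ hV) (pow_ne_zero _ ih)

lemma PRmat_continuous (d s : ℕ) : Continuous (PRmat d s) := by
  apply continuous_matrix
  intro ν α
  show Continuous fun η : (Fin d → Fin s) → Fin d → ℝ =>
    ∏ m, (((ν m : ℕ) : ℝ) + η ν m) ^ ((α m : ℕ))
  fun_prop

lemma PR_eval_expand {d : ℕ} {ι : Type*} (t : Finset ι) (w : ι → ℝ)
    (Y : ι → Fin d → ℝ) (z : Fin d → ℝ) (q : MvPolynomial (Fin d) ℝ)
    (hsys : ∀ β ∈ q.support,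
      ∑ ν ∈ t, w ν * ∏ m, (Y ν m) ^ (β m) = ∏ m, (z m) ^ (β m)) :
    MvPolynomial.eval z q = ∑ ν ∈ t, w ν * MvPolynomial.eval (Y ν) q := by
  rw [MvPolynomial.eval_eq']
  have hev : ∀ ν, MvPolynomial.eval (Y ν) q
      = ∑ β ∈ q.support, q.coeff β * ∏ m, (Y ν m) ^ (β m) :=
    fun ν => MvPolynomial.eval_eq' _ _
  simp_rw [hev, Finset.mul_sum]
  rw [Finset.sum_comm]
  refine Finset.sum_congr rfl (fun β hβ => ?_)
  rw [← hsys β hβ, Finset.mul_sum]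
  exact Finset.sum_congr rfl (fun ν _ => by ring)

lemma PR_sum_le_totalDegree {d : ℕ} {p : MvPolynomial (Fin d) ℝ}
    {α : Fin d →₀ ℕ} (hα : α ∈ p.support) : (∑ m, α m) ≤ p.totalDegree := by
  have h1 : (α.sum fun _ e => e) ≤ p.totalDegree := MvPolynomial.le_totalDegree hα
  refine le_trans (le_of_eq ?_) h1
  rw [Finsupp.sum]
  exact (Finset.sum_subset (Finset.subset_univ _)
    (fun x _ hx => Finsupp.notMem_support_iff.mp hx)).symm

lemma PR_coord_le_norm {d : ℕ} (v : EuclideanSpace ℝ (Fin d)) (m : Fin d) :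
    |v m| ≤ ‖v‖ := by
  rw [EuclideanSpace.norm_eq]
  have h1 : |v m| = Real.sqrt (|v m| ^ 2) := (Real.sqrt_sq (abs_nonneg _)).symm
  rw [h1]
  apply Real.sqrt_le_sqrt
  rw [sq_abs]
  refine Finset.single_le_sum (f := fun i => ‖v i‖ ^ 2) (fun i _ => by positivity)
    (Finset.mem_univ m) |>.trans_eq' ?_
  rw [Real.norm_eq_abs, sq_abs]

/-- Polynomial reproduction from scattered points: any point value
`p(x₀)` of a polynomial of total degree at most `s − 1` can be reproduced by a fixed
set of `s^d` points of any `h`-dense point set within distance `ρ(d,s)·h` of `x₀`,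
with weights of total mass at most `C(d,s)`. -/
theorem polynomial_reproduction_from_scattered_points
    (d s : ℕ) (hd : 1 ≤ d) (hs : 1 ≤ s) :
    ∃ ρ C : ℝ, 0 < ρ ∧ 0 < C ∧
      ∀ h : ℝ, 0 < h →
      ∀ X : Set (EuclideanSpace ℝ (Fin d)),
        (∀ y : EuclideanSpace ℝ (Fin d), ∃ x ∈ X, ‖y - x‖ ≤ h) →
        ∀ x₀ : EuclideanSpace ℝ (Fin d),
          ∃ (σ : Finset (EuclideanSpace ℝ (Fin d))) (w : EuclideanSpace ℝ (Fin d) → ℝ),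
            ↑σ ⊆ X ∧
            σ.card = s ^ d ∧
            (∀ x ∈ σ, ‖x - x₀‖ ≤ ρ * h) ∧
            (∑ x ∈ σ, |w x|) ≤ C ∧
            ∀ p : MvPolynomial (Fin d) ℝ, p.totalDegree ≤ s - 1 →
              MvPolynomial.eval (fun m => x₀ m) p =
                ∑ x ∈ σ, w x * MvPolynomial.eval (fun m => x m) p := by
  classical
  haveI : Nonempty (Fin d → Fin s) := ⟨fun _ => ⟨0, hs⟩⟩
  have hdet0 : (PRmat d s 0).det ≠ 0 := PRmat_det_ne_zero d s
  have hcont_det : Continuous fun η => (PRmat d s η).det := (PRmat_continuous d s).matrix_det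
  -- a radius on which the determinant stays nonzero
  obtain ⟨r, hr0, hball⟩ :
      ∃ r : ℝ, 0 < r ∧ ∀ η, (∀ ν m, |η ν m| ≤ r) → (PRmat d s η).det ≠ 0 := by
    have h1 : ContinuousAt (fun η => (PRmat d s η).det) 0 := hcont_det.continuousAt
    rw [Metric.continuousAt_iff] at h1
    obtain ⟨δ, hδ, hδ'⟩ := h1 (|(PRmat d s 0).det|) (abs_pos.mpr hdet0)
    refine ⟨δ/2, by positivity, fun η hη hzero => ?_⟩
    have hdist : dist η 0 ≤ δ/2 := by
      rw [dist_pi_le_iff (by positivity)]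
      intro ν
      rw [dist_pi_le_iff (by positivity)]
      intro m
      rw [Real.dist_eq]
      simpa using hη ν m
    have h2 := hδ' (show dist η 0 < δ from lt_of_le_of_lt hdist (by linarith))
    rw [Real.dist_eq, hzero, zero_sub, abs_neg] at h2
    exact absurd h2 (lt_irrefl _)
  set r' : ℝ := min r 4⁻¹ with hr'def
  have hr'0 : 0 < r' := lt_min hr0 (by norm_num)
  have hr'r : r' ≤ r := min_le_left _ _
  have hr'4 : r' ≤ 4⁻¹ := min_le_right _ _
  -- compact set of admissible perturbations
  set D : Set ((Fin d → Fin s) → Fin d → ℝ) :=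
    {η | ∀ ν m, η ν m ∈ Set.Icc (-r') r'} with hDdef
  have hDcomp : IsCompact D := by
    have hDeq : D = Set.univ.pi (fun ν => Set.univ.pi fun _ => Set.Icc (-r') r') := by
      ext η
      simp only [hDdef, Set.mem_setOf_eq, Set.mem_pi, Set.mem_univ, forall_true_left,
        Set.mem_Icc]
    rw [hDeq]
    exact isCompact_univ_pi fun ν => isCompact_univ_pi fun _ => isCompact_Icc
  have hDne : ∀ η ∈ D, (PRmat d s η).det ≠ 0 := by
    intro η hη
    refine hball η (fun ν m => ?_)
    have := hη ν m
    rw [Set.mem_Icc] at this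
    exact le_trans (abs_le.mpr this) hr'r
  -- the weight vector as a function of the perturbation
  set e : (Fin d → Fin s) → ℝ := fun α => ∏ m, (0:ℝ) ^ ((α m : ℕ)) with hedef
  set wv : ((Fin d → Fin s) → Fin d → ℝ) → (Fin d → Fin s) → ℝ :=
    fun η => ((PRmat d s η).transpose)⁻¹.mulVec e with hwvdef
  -- the total-mass function is continuous on D
  have hwv_cont : ∀ ν, ContinuousOn (fun η => wv η ν) D := by
    intro ν
    have h1 : ∀ η, wv η ν
        = ((PRmat d s η).det)⁻¹ * (((PRmat d s η).transpose).adjugate.mulVec e ν) := by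
      intro η
      rw [hwvdef]
      simp only [Matrix.inv_def, Ring.inverse_eq_inv', Matrix.det_transpose,
        Matrix.smul_mulVec, Pi.smul_apply, smul_eq_mul]
    simp_rw [h1]
    refine ContinuousOn.mul ((hcont_det.continuousOn).inv₀ hDne) ?_
    have h2 : Continuous fun η => ((PRmat d s η).transpose).adjugate.mulVec e ν := by
      have := ((PRmat_continuous d s).matrix_transpose.matrix_adjugate)
      exact (continuous_apply ν).comp (this.matrix_mulVec continuous_const)
    exact h2.continuousOn
  have hg_cont : ContinuousOn (fun η => ∑ ν, |wv η ν|) D := by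
    refine continuousOn_finset_sum _ (fun ν _ => (hwv_cont ν).abs)
  obtain ⟨C0, hC0⟩ := hDcomp.bddAbove_image hg_cont
  have hC0' : ∀ η ∈ D, (∑ ν, |wv η ν|) ≤ C0 := fun η hη =>
    hC0 (Set.mem_image_of_mem _ hη)
  set K : ℝ := r'⁻¹ with hKdef
  have hK0 : 0 < K := inv_pos.mpr hr'0
  have hd1 : (1:ℝ) ≤ (d:ℝ) := by exact_mod_cast hd
  have hs1 : (1:ℝ) ≤ (s:ℝ) := by exact_mod_cast hs
  have hds : (0:ℝ) < (d:ℝ) * s := mul_pos (by linarith) (by linarith)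
  refine ⟨K * ((d:ℝ) * s), max C0 1, mul_pos hK0 hds,
    lt_of_lt_of_le one_pos (le_max_right _ _), ?_⟩
  intro h hh X hX x₀
  have hKh : 0 < K * h := mul_pos hK0 hh
  -- choose points of X near the scaled grid
  have hchoose : ∀ ν : Fin d → Fin s, ∃ x ∈ X,
      ‖(show EuclideanSpace ℝ (Fin d) from WithLp.toLp 2
          fun m => x₀ m + (K * h) * ((ν m : ℕ) : ℝ)) - x‖ ≤ h :=
    fun ν => hX _
  choose xf hxfX hxfnear using hchoose
  set η : (Fin d → Fin s) → Fin d → ℝ :=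
    fun ν m => (xf ν m - x₀ m) / (K * h) - ((ν m : ℕ) : ℝ) with hηdef
  have hηbound : ∀ ν m, |η ν m| ≤ r' := by
    intro ν m
    have h1 : |((show EuclideanSpace ℝ (Fin d) from WithLp.toLp 2
        fun m => x₀ m + (K * h) * ((ν m : ℕ) : ℝ)) - xf ν) m| ≤ h :=
      le_trans (PR_coord_le_norm _ m) (hxfnear ν)
    have h2 : ((show EuclideanSpace ℝ (Fin d) from WithLp.toLp 2
        fun m => x₀ m + (K * h) * ((ν m : ℕ) : ℝ)) - xf ν) m
        = x₀ m + (K * h) * ((ν m : ℕ) : ℝ) - xf ν m := rfl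
    rw [h2] at h1
    have h3 : η ν m = -(x₀ m + (K * h) * ((ν m : ℕ) : ℝ) - xf ν m) / (K * h) := by
      rw [hηdef]
      field_simp
      ring
    rw [h3, abs_div, abs_neg, abs_of_pos hKh]
    rw [div_le_iff₀ hKh]
    calc |x₀ m + K * h * ((ν m : ℕ) : ℝ) - xf ν m| ≤ h := h1
      _ = r' * (K * h) := by
          rw [hKdef]
          field_simp
      _ ≤ r' * (K * h) := le_refl _
  have hηD : η ∈ D := by
    intro ν m
    rw [Set.mem_Icc]
    exact abs_le.mp (hηbound ν m)
  have hdetη : (PRmat d s η).det ≠ 0 := hDne η hηD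
  set Y : (Fin d → Fin s) → Fin d → ℝ :=
    fun ν m => ((ν m : ℕ) : ℝ) + η ν m with hYdef
  have hY : ∀ ν m, xf ν m = x₀ m + (K * h) * Y ν m := by
    intro ν m
    rw [hYdef, hηdef]
    field_simp
    ring
  -- the linear system satisfied by the weights
  have hsysβ : ∀ β : Fin d →₀ ℕ, (∀ m, β m < s) →
      ∑ ν, wv η ν * ∏ m, (Y ν m) ^ (β m) = ∏ m, (0:ℝ) ^ (β m) := by
    intro β hβ
    have hMv : ((PRmat d s η).transpose).mulVec (wv η) = e := by
      rw [hwvdef, Matrix.mulVec_mulVec, Matrix.mul_nonsing_inv, Matrix.one_mulVec]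
      rw [Matrix.det_transpose]
      exact isUnit_iff_ne_zero.mpr hdetη
    set k : Fin d → Fin s := fun m => ⟨β m, hβ m⟩ with hkdef
    have h2 := congrFun hMv k
    simp only [Matrix.mulVec, dotProduct, Matrix.transpose_apply] at h2
    calc ∑ ν, wv η ν * ∏ m, (Y ν m) ^ (β m)
        = ∑ ν, PRmat d s η ν k * wv η ν := by
          refine Finset.sum_congr rfl fun ν _ => ?_
          rw [mul_comm]
          rfl
      _ = e k := h2
      _ = ∏ m, (0:ℝ) ^ (β m) := by rw [hedef]
  -- the system for monomials centered at x₀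
  have hsysα : ∀ α : Fin d →₀ ℕ, (∑ m, α m) ≤ s - 1 →
      ∑ ν, wv η ν * ∏ m, (xf ν m) ^ (α m) = ∏ m, (x₀ m) ^ (α m) := by
    intro α hα
    set P : MvPolynomial (Fin d) ℝ :=
      ∏ m, (MvPolynomial.C (x₀ m) + MvPolynomial.C (K * h) * MvPolynomial.X m) ^ (α m)
      with hPdef
    have hPeval : ∀ y : Fin d → ℝ,
        MvPolynomial.eval y P = ∏ m, (x₀ m + (K * h) * y m) ^ (α m) := by
      intro y
      rw [hPdef]
      simp
    have hPdeg : P.totalDegree ≤ s - 1 := by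
      rw [hPdef]
      refine le_trans (MvPolynomial.totalDegree_finset_prod _ _) (le_trans ?_ hα)
      refine Finset.sum_le_sum (fun m _ => ?_)
      refine le_trans (MvPolynomial.totalDegree_pow _ _) ?_
      have h1 : (MvPolynomial.C (x₀ m) + MvPolynomial.C (K * h)
          * MvPolynomial.X m : MvPolynomial (Fin d) ℝ).totalDegree ≤ 1 := by
        refine le_trans (MvPolynomial.totalDegree_add _ _) (max_le ?_ ?_)
        · simp [MvPolynomial.totalDegree_C]
        · refine le_trans (MvPolynomial.totalDegree_mul _ _) ?_
          rw [MvPolynomial.totalDegree_C, MvPolynomial.totalDegree_X]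
      calc α m * (MvPolynomial.C (x₀ m) + MvPolynomial.C (K * h)
              * MvPolynomial.X m : MvPolynomial (Fin d) ℝ).totalDegree
          ≤ α m * 1 := Nat.mul_le_mul_left _ h1
        _ = α m := mul_one _
    have hPsupp : ∀ β ∈ P.support,
        ∑ ν, wv η ν * ∏ m, (Y ν m) ^ (β m) = ∏ m, ((0 : Fin d → ℝ) m) ^ (β m) := by
      intro β hβ
      refine hsysβ β (fun m => ?_)
      have hb1 : β m ≤ P.totalDegree :=
        le_trans (MvPolynomial.monomial_le_degreeOf m hβ)
          (MvPolynomial.degreeOf_le_totalDegree P m)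
      have : β m ≤ s - 1 := le_trans hb1 hPdeg
      omega
    have hmain := PR_eval_expand Finset.univ (wv η) Y 0 P hPsupp
    have hz : MvPolynomial.eval (0 : Fin d → ℝ) P = ∏ m, (x₀ m) ^ (α m) := by
      rw [hPeval]
      simp
    have hYe : ∀ ν, MvPolynomial.eval (Y ν) P = ∏ m, (xf ν m) ^ (α m) := by
      intro ν
      rw [hPeval]
      refine Finset.prod_congr rfl fun m _ => ?_
      rw [← hY ν m]
    calc ∑ ν, wv η ν * ∏ m, (xf ν m) ^ (α m)
        = ∑ ν, wv η ν * MvPolynomial.eval (Y ν) P :=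
          Finset.sum_congr rfl fun ν _ => by rw [hYe ν]
      _ = MvPolynomial.eval (0 : Fin d → ℝ) P := hmain.symm
      _ = ∏ m, (x₀ m) ^ (α m) := hz
  -- the chosen points are pairwise distinct
  have hinj : Function.Injective xf := by
    intro ν ν' hEq
    funext m
    by_contra hne
    have hxm : xf ν m = xf ν' m := by rw [hEq]
    have hYm : Y ν m = Y ν' m := by
      have h4 := (hY ν m).symm.trans (hxm.trans (hY ν' m))
      have h5 : (K * h) * Y ν m = (K * h) * Y ν' m := by linarith
      exact mul_left_cancel₀ (ne_of_gt hKh) h5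
    have hvne : ((ν m : ℕ) : ℤ) ≠ ((ν' m : ℕ) : ℤ) := by
      intro hc
      exact hne (Fin.ext (by exact_mod_cast hc))
    have hge : (1:ℝ) ≤ |((ν m : ℕ) : ℝ) - ((ν' m : ℕ) : ℝ)| := by
      have h5 : (1:ℤ) ≤ |((ν m : ℕ) : ℤ) - ((ν' m : ℕ) : ℤ)| :=
        Int.one_le_abs (sub_ne_zero.mpr hvne)
      exact_mod_cast h5
    have h7 : ((ν m : ℕ) : ℝ) - ((ν' m : ℕ) : ℝ) = η ν' m - η ν m := by
      have h8 := hYm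
      rw [hYdef] at h8
      simp only at h8
      linarith
    rw [h7] at hge
    have h8 : |η ν' m - η ν m| ≤ |η ν' m| + |η ν m| := abs_sub _ _
    have h9 := hηbound ν m
    have h10 := hηbound ν' m
    have h11 : r' ≤ 4⁻¹ := hr'4
    linarith
  refine ⟨Finset.univ.image xf, fun x => wv η (Function.invFun xf x), ?_, ?_, ?_, ?_, ?_⟩
  · intro x hx
    obtain ⟨ν, -, rfl⟩ := Finset.mem_image.mp (by exact_mod_cast hx)
    exact hxfX ν
  · rw [Finset.card_image_of_injective _ hinj, Finset.card_univ]
    simp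
  · intro x hx
    obtain ⟨ν, -, rfl⟩ := Finset.mem_image.mp hx
    have hcoord : ∀ m, |(xf ν - x₀) m| ≤ (K * h) * s := by
      intro m
      have h1 : (xf ν - x₀) m = (K * h) * Y ν m := by
        have h0 : (xf ν - x₀) m = xf ν m - x₀ m := rfl
        rw [h0, hY ν m]
        ring
      have h2 : |Y ν m| ≤ (s : ℝ) := by
        have h3 : ((ν m : ℕ) : ℝ) ≤ (s : ℝ) - 1 := by
          have h3a := (ν m).is_lt
          have h3b : ((ν m : ℕ) : ℝ) + 1 ≤ (s : ℝ) := by exact_mod_cast h3a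
          linarith
        have h4 := abs_le.mp (hηbound ν m)
        have h5 : (0:ℝ) ≤ ((ν m : ℕ) : ℝ) := Nat.cast_nonneg _
        rw [hYdef]
        simp only
        rw [abs_le]
        constructor
        · have : r' ≤ 1 := le_trans hr'4 (by norm_num)
          linarith
        · have : r' ≤ 1 := le_trans hr'4 (by norm_num)
          linarith
      calc |(xf ν - x₀) m| = (K * h) * |Y ν m| := by
            rw [h1, abs_mul, abs_of_pos hKh]
        _ ≤ (K * h) * s := mul_le_mul_of_nonneg_left h2 hKh.le
    have hnorm : ‖xf ν - x₀‖ ≤ (K * h) * ((d : ℝ) * s) := by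
      rw [EuclideanSpace.norm_eq]
      have hb : ∀ m : Fin d, ‖(xf ν - x₀) m‖ ^ 2 ≤ ((K * h) * s) ^ 2 := by
        intro m
        rw [Real.norm_eq_abs]
        exact pow_le_pow_left₀ (abs_nonneg _) (hcoord m) 2
      calc Real.sqrt (∑ m, ‖(xf ν - x₀) m‖ ^ 2)
          ≤ Real.sqrt (∑ _m : Fin d, ((K * h) * s) ^ 2) :=
            Real.sqrt_le_sqrt (Finset.sum_le_sum fun m _ => hb m)
        _ = Real.sqrt ((d : ℝ) * ((K * h) * s) ^ 2) := by
            rw [Finset.sum_const, Finset.card_univ, Fintype.card_fin, nsmul_eq_mul]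
        _ ≤ Real.sqrt (((K * h) * ((d : ℝ) * s)) ^ 2) := by
            apply Real.sqrt_le_sqrt
            have he : ((K * h) * ((d : ℝ) * s)) ^ 2
                = ((d : ℝ) * ((K * h) * s) ^ 2) * d := by ring
            rw [he]
            exact le_mul_of_one_le_right (by positivity) hd1
        _ = (K * h) * ((d : ℝ) * s) := Real.sqrt_sq (by positivity)
    calc ‖xf ν - x₀‖ ≤ (K * h) * ((d : ℝ) * s) := hnorm
      _ = K * ((d : ℝ) * s) * h := by ring
  · rw [Finset.sum_image (fun a _ b _ hab => hinj hab)]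
    calc ∑ ν, |wv η (Function.invFun xf (xf ν))|
        = ∑ ν, |wv η ν| :=
          Finset.sum_congr rfl fun ν _ => by rw [Function.leftInverse_invFun hinj ν]
      _ ≤ C0 := hC0' η hηD
      _ ≤ max C0 1 := le_max_left _ _
  · intro p hp
    rw [Finset.sum_image (fun a _ b _ hab => hinj hab)]
    refine (PR_eval_expand Finset.univ (wv η) (fun ν m => xf ν m) (fun m => x₀ m) p ?_).trans ?_
    · intro β hβ
      exact hsysα β (le_trans (PR_sum_le_totalDegree hβ) hp)
    · refine Finset.sum_congr rfl fun ν _ => ?_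
      simp only []
      rw [Function.leftInverse_invFun hinj ν]
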